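/- Let f : X → X be a homeomorphism of a compact metric space. If f admits a renormalization domain of period τ for every τ in an infinite set of integers tending to infinity, and these domains are nested (D_{k+1} ⊆ D_k with periods τ_k | τ_{k+1}, τ_k → ∞), then the intersection K = ⋂_k ⋃_{i<τ_k} f^i(D_k) is a nonempty closed invariant set containing no periodic point of f. -/

import Mathlib

open Set

/-- An infinitely renormalizable structure for a homeomorphism `f` of a compact metric space:
nested closed nonempty renormalization domains `D k` of periods `τ k`, with `τ k ∣ τ (k+1)` and
`τ k → ∞`. Then `K = ⋂ k, ⋃_{i < τ k} f^i(D k)` is a nonempty closed invariant set containing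
no periodic point of `f`. -/
theorem infinitely_renormalizable_limit_set
    {X : Type*} [MetricSpace X] [CompactSpace X]
    (f : X ≃ₜ X) (D : ℕ → Set X) (τ : ℕ → ℕ)
    (hclosed : ∀ k, IsClosed (D k)) (hne : ∀ k, (D k).Nonempty)
    (hτ1 : ∀ k, 1 ≤ τ k)
    (hdisj : ∀ k, ∀ i : ℕ, 1 ≤ i → i < τ k → ((⇑f)^[i] '' D k) ∩ D k = ∅)
    (hret : ∀ k, (⇑f)^[τ k] '' D k ⊆ D k)
    (hnested : ∀ k, D (k + 1) ⊆ D k) (hdvd : ∀ k, τ k ∣ τ (k + 1))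
    (htend : Filter.Tendsto τ Filter.atTop Filter.atTop) :
    let K := ⋂ k, ⋃ i ∈ Finset.range (τ k), (⇑f)^[i] '' D k
    K.Nonempty ∧ IsClosed K ∧ (⇑f) '' K ⊆ K ∧
      ∀ p ∈ K, ∀ n : ℕ, 1 ≤ n → (⇑f)^[n] p ≠ p := by
  intro K
  set L : ℕ → Set X := fun k => ⋃ i ∈ Finset.range (τ k), (⇑f)^[i] '' D k with hLdef
  have hK : K = ⋂ k, L k := rfl
  have hcompactD : ∀ k, IsCompact (D k) := fun k => (hclosed k).isCompact
  have hLclosed : ∀ k, IsClosed (L k) := by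
    intro k
    apply Set.Finite.isClosed_biUnion (Finset.finite_toSet _)
    intro i _
    exact ((hcompactD k).image (f.continuous.iterate i)).isClosed
  have hmemL : ∀ k z, z ∈ L k ↔ ∃ i, i < τ k ∧ z ∈ (⇑f)^[i] '' D k := by
    intro k z
    simp [hLdef, Set.mem_iUnion]
  have hmul : ∀ k m, (⇑f)^[τ k * m] '' D k ⊆ D k := by
    intro k m
    induction m with
    | zero => simp
    | succ m ih =>
      have h1 : τ k * (m + 1) = τ k + τ k * m := by ring
      rw [h1, Function.iterate_add, Set.image_comp]
      exact (Set.image_mono ih).trans (hret k)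
  have hLnested : ∀ k, L (k + 1) ⊆ L k := by
    intro k z hz
    rw [hmemL] at hz ⊢
    obtain ⟨i, hi, x, hx, hfx⟩ := hz
    refine ⟨i % τ k, Nat.mod_lt _ (hτ1 k), (⇑f)^[τ k * (i / τ k)] x, ?_, ?_⟩
    · exact hmul k (i / τ k) ⟨x, hnested k hx, rfl⟩
    · rw [← Function.iterate_add_apply]
      rw [show i % τ k + τ k * (i / τ k) = i from Nat.mod_add_div i (τ k)]
      exact hfx
  have hLne : ∀ k, (L k).Nonempty := by
    intro k
    obtain ⟨x, hx⟩ := hne k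
    exact ⟨x, (hmemL k x).mpr ⟨0, hτ1 k, x, hx, rfl⟩⟩
  refine ⟨?_, ?_, ?_, ?_⟩
  · rw [hK]
    exact IsCompact.nonempty_iInter_of_sequence_nonempty_isCompact_isClosed L hLnested hLne
      ((hLclosed 0).isCompact) hLclosed
  · rw [hK]; exact isClosed_iInter hLclosed
  · have hLinv : ∀ k, (⇑f) '' L k ⊆ L k := by
      intro k z hz
      obtain ⟨w, hw, rfl⟩ := hz
      rw [hmemL] at hw ⊢
      obtain ⟨i, hi, x, hx, rfl⟩ := hw
      rcases lt_or_eq_of_le (Nat.succ_le_of_lt hi) with h | h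
      · exact ⟨i + 1, h, x, hx, by rw [Function.iterate_succ_apply']⟩
      · refine ⟨0, hτ1 k, (⇑f)^[τ k] x, hret k ⟨x, hx, rfl⟩, ?_⟩
        simp [← h, Function.iterate_succ_apply']
    rw [hK]
    rintro z ⟨w, hw, rfl⟩
    rw [Set.mem_iInter] at hw ⊢
    exact fun k => hLinv k ⟨w, hw k, rfl⟩
  · intro p hp n hn hper
    obtain ⟨k, hk⟩ := (htend.eventually (Filter.eventually_ge_atTop (n + 1))).exists
    have hpk : p ∈ L k := by rw [hK, Set.mem_iInter] at hp; exact hp k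
    rw [hmemL] at hpk
    obtain ⟨i, hi, x, hx, hfx⟩ := hpk
    have hyD : (⇑f)^[τ k - i] p ∈ D k := by
      have h1 : (⇑f)^[τ k - i] p = (⇑f)^[τ k] x := by
        rw [← hfx, ← Function.iterate_add_apply]
        congr 1
        omega
      rw [h1]
      exact hret k ⟨x, hx, rfl⟩
    have hfy : (⇑f)^[n] ((⇑f)^[τ k - i] p) = (⇑f)^[τ k - i] p := by
      rw [← Function.iterate_add_apply, Nat.add_comm, Function.iterate_add_apply, hper]
    have hmem : (⇑f)^[τ k - i] p ∈ ((⇑f)^[n] '' D k) ∩ D k :=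
      ⟨⟨(⇑f)^[τ k - i] p, hyD, hfy⟩, hyD⟩
    rw [hdisj k n hn (by omega)] at hmem
    exact hmem
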